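/- Let G = (V,E) be a finite simple graph on V = {1,…,n}, let J be a set of subsets of V, and let (x,X) ∈ TH²(G) be such that X_I ∈ STAB²(G_I) for all I ∈ J and γ := 1ᵀx ≥ 1. Then the matrix X' = (1/γ) X satisfies: X' ∈ CTH²(G), X'_I ∈ STAB²(G_I) for all I ∈ J, and ⟨J_{n×n}, X'⟩ ≥ γ. -/

import Mathlib

open Matrix

noncomputable section

/-- A stable set vector of a graph `G`: a 0/1 vector with `s i * s j = 0` on edges. -/
def IsStableVec {V : Type*} (G : SimpleGraph V) (s : V → ℝ) : Prop :=
  (∀ i, s i = 0 ∨ s i = 1) ∧ ∀ i j, G.Adj i j → s i * s j = 0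

/-- The squared stable set polytope `STAB²(G) = conv{ s sᵀ : s ∈ S(G) }`. -/
def stab2 {V : Type*} (G : SimpleGraph V) : Set (Matrix V V ℝ) :=
  convexHull ℝ { M | ∃ s, IsStableVec G s ∧ M = Matrix.vecMulVec s s }

/-- The scaled squared stable set polytope
`SSTAB²(G) = conv({ (1/(sᵀs)) s sᵀ : s ∈ S(G), s ≠ 0 } ∪ {0})`. -/
def sstab2 {V : Type*} [Fintype V] (G : SimpleGraph V) : Set (Matrix V V ℝ) :=
  convexHull ℝ
    ({ M | ∃ s, IsStableVec G s ∧ s ≠ 0 ∧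
        M = (∑ k, s k * s k)⁻¹ • Matrix.vecMulVec s s } ∪ {(0 : Matrix V V ℝ)})

/-- The feasible region `TH²(G)` of the SDP (Tn+1): pairs `(x, X)` with `X` symmetric,
`diag X = x`, `X i j = 0` on edges and `X - x xᵀ` positive semidefinite. -/
def th2 {n : ℕ} (G : SimpleGraph (Fin n)) :
    Set ((Fin n → ℝ) × Matrix (Fin n) (Fin n) ℝ) :=
  { p | p.2.IsSymm ∧ (∀ i, p.2 i i = p.1 i) ∧
      (∀ i j, G.Adj i j → p.2 i j = 0) ∧ (p.2 - Matrix.vecMulVec p.1 p.1).PosSemidef }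

/-- The feasible region `CTH²(G)` of the SDP (Tn): symmetric PSD matrices with trace 1
vanishing on edges. -/
def cth2 {n : ℕ} (G : SimpleGraph (Fin n)) : Set (Matrix (Fin n) (Fin n) ℝ) :=
  { X | X.IsSymm ∧ X.trace = 1 ∧ (∀ i j, G.Adj i j → X i j = 0) ∧ X.PosSemidef }

/-- The principal submatrix `X_I` of `X` indexed by `I`. -/
def subMat {n : ℕ} (X : Matrix (Fin n) (Fin n) ℝ) (I : Finset (Fin n)) :
    Matrix (I : Set (Fin n)) (I : Set (Fin n)) ℝ :=
  X.submatrix Subtype.val Subtype.val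

/-- The exact subgraph constraint (ESC) for the subgraph of `G` induced by `I`. -/
def escFeas {n : ℕ} (G : SimpleGraph (Fin n)) (X : Matrix (Fin n) (Fin n) ℝ)
    (I : Finset (Fin n)) : Prop :=
  subMat X I ∈ stab2 (G.induce (I : Set (Fin n)))

/-- The scaled exact subgraph constraint (SESC) for the subgraph of `G` induced by `I`. -/
def sescFeas {n : ℕ} (G : SimpleGraph (Fin n)) (X : Matrix (Fin n) (Fin n) ℝ)
    (I : Finset (Fin n)) : Prop :=
  subMat X I ∈ sstab2 (G.induce (I : Set (Fin n)))

/-- `z^E_J(G)`: optimal value of (Tn+1) with the ESCs for all `I ∈ J`. -/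
def zE {n : ℕ} (G : SimpleGraph (Fin n)) (J : Set (Finset (Fin n))) : ℝ :=
  sSup { r | ∃ x X, (x, X) ∈ th2 G ∧ (∀ I ∈ J, escFeas G X I) ∧ r = ∑ i, x i }

/-- `z^C_J(G)`: optimal value of (Tn) with the ESCs for all `I ∈ J`. -/
def zC {n : ℕ} (G : SimpleGraph (Fin n)) (J : Set (Finset (Fin n))) : ℝ :=
  sSup { r | ∃ X, X ∈ cth2 G ∧ (∀ I ∈ J, escFeas G X I) ∧ r = ∑ i, ∑ j, X i j }

/-- `z^S_J(G)`: optimal value of (Tn) with the SESCs for all `I ∈ J`. -/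
def zS {n : ℕ} (G : SimpleGraph (Fin n)) (J : Set (Finset (Fin n))) : ℝ :=
  sSup { r | ∃ X, X ∈ cth2 G ∧ (∀ I ∈ J, sescFeas G X I) ∧ r = ∑ i, ∑ j, X i j }

/-- The collection `J_k` of all vertex subsets of cardinality `k`. -/
def Jk (n k : ℕ) : Set (Finset (Fin n)) := { I | I.card = k }

/-- if `(x,X) ∈ TH²(G)` satisfies the ESCs for all `I ∈ J` and
`γ = 1ᵀx ≥ 1`, then `X' = (1/γ) X` lies in `CTH²(G)`, satisfies the same ESCs, and
`⟨J_{n×n}, X'⟩ ≥ γ`. -/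
theorem stmt14 {n : ℕ} (G : SimpleGraph (Fin n)) (J : Set (Finset (Fin n)))
    (x : Fin n → ℝ) (X : Matrix (Fin n) (Fin n) ℝ)
    (hmem : (x, X) ∈ th2 G) (hJ : ∀ I ∈ J, escFeas G X I)
    (hγ : 1 ≤ ∑ i, x i) :
    (∑ i, x i)⁻¹ • X ∈ cth2 G ∧
    (∀ I ∈ J, escFeas G ((∑ i, x i)⁻¹ • X) I) ∧
    (∑ i, x i) ≤ ∑ i, ∑ j, ((∑ k, x k)⁻¹ • X) i j := by
  obtain ⟨hsym, hdiag, hedge, hpsd⟩ := hmem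
  set γ : ℝ := ∑ i, x i with hγdef
  have hγ0 : (0:ℝ) < γ := lt_of_lt_of_le one_pos hγ
  have hγinv : (0:ℝ) ≤ γ⁻¹ := by positivity
  have hγinv1 : γ⁻¹ ≤ 1 := inv_le_one_of_one_le₀ hγ
  -- vecMulVec x x is PSD
  have hvv : (Matrix.vecMulVec x x).PosSemidef := by
    rw [Matrix.posSemidef_iff_dotProduct_mulVec]
    constructor
    · rw [Matrix.IsHermitian, Matrix.conjTranspose_eq_transpose_of_trivial]
      ext i j
      simp [Matrix.vecMulVec_apply, mul_comm]
    · intro y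
      have e : dotProduct (star y) (Matrix.vecMulVec x x *ᵥ y)
          = (∑ i, x i * y i) * (∑ j, x j * y j) := by
        simp only [star_trivial, dotProduct, Matrix.mulVec, Matrix.vecMulVec_apply,
          Finset.sum_mul_sum, dotProduct]
        apply Finset.sum_congr rfl; intro i _
        rw [Finset.mul_sum]
        apply Finset.sum_congr rfl; intro j _
        ring
      rw [e]
      exact mul_self_nonneg _
  have hXpsd : X.PosSemidef := by
    have h := hpsd.add hvv
    simpa using h
  -- key inequality
  have hkey : γ * γ ≤ ∑ i, ∑ j, X i j := by
    have h := hpsd.dotProduct_mulVec_nonneg 1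
    have e : dotProduct (star (1 : Fin n → ℝ)) ((X - Matrix.vecMulVec x x) *ᵥ 1)
        = (∑ i, ∑ j, X i j) - γ * γ := by
      simp only [star_trivial, dotProduct, Matrix.mulVec, Matrix.sub_apply,
        Matrix.vecMulVec_apply, Pi.one_apply, mul_one, one_mul, Finset.sum_sub_distrib, hγdef,
        Finset.sum_mul_sum]
    rw [e] at h
    linarith
  refine ⟨⟨hsym.smul _, ?_, ?_, ?_⟩, ?_, ?_⟩
  · rw [Matrix.trace_smul]
    have : X.trace = γ := by
      rw [Matrix.trace, hγdef]
      exact Finset.sum_congr rfl fun i _ => hdiag i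
    rw [this, smul_eq_mul, inv_mul_cancel₀ (ne_of_gt hγ0)]
  · intro i j hadj
    simp only [Matrix.smul_apply, smul_eq_mul]
    rw [show X i j = 0 from hedge i j hadj, mul_zero]
  · rw [Matrix.posSemidef_iff_dotProduct_mulVec]
    constructor
    · rw [Matrix.IsHermitian, Matrix.conjTranspose_eq_transpose_of_trivial]
      exact hsym.smul _
    · intro y
      have := hXpsd.dotProduct_mulVec_nonneg y
      simp only [Matrix.smul_mulVec, dotProduct_smul, smul_eq_mul]
      positivity
  · intro I hI
    have hM := hJ I hI
    have h0 : (0 : Matrix (I : Set (Fin n)) (I : Set (Fin n)) ℝ)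
        ∈ stab2 (G.induce (I : Set (Fin n))) :=
      subset_convexHull ℝ _ ⟨0, ⟨fun i => Or.inl rfl, fun i j _ => by simp⟩, by
        ext i j; simp [Matrix.vecMulVec_apply]⟩
    have hconv : Convex ℝ (stab2 (G.induce (I : Set (Fin n)))) := convex_convexHull ℝ _
    have hmem2 := hconv hM h0 hγinv (by linarith : (0:ℝ) ≤ 1 - γ⁻¹) (by ring)
    have hsub : subMat (γ⁻¹ • X) I = γ⁻¹ • subMat X I := by
      ext i j; simp [subMat, Matrix.smul_apply]
    unfold escFeas
    rw [hsub]
    simpa using hmem2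
  · have hsum : ∑ i, ∑ j, (γ⁻¹ • X) i j = γ⁻¹ * ∑ i, ∑ j, X i j := by
      simp [Matrix.smul_apply, Finset.mul_sum]
    rw [hsum]
    calc γ = γ⁻¹ * (γ * γ) := by field_simp
      _ ≤ γ⁻¹ * ∑ i, ∑ j, X i j := mul_le_mul_of_nonneg_left hkey hγinv
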